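/- Let g : S² → S² be a ramified covering of degree 2, i.e. a ramified covering such that every point of S² that is not a critical value of g has exactly two g-preimages. Then there exists a homeomorphism M : S² → S², different from the identity, such that M ∘ M = id and g ∘ M = g. -/

import Mathlib

open Set Filter Topology

noncomputable section

abbrev Sph : Type := Metric.sphere (0 : EuclideanSpace ℝ (Fin 3)) 1

/-- The open unit disk in ℂ. -/
def unitDisk : Set ℂ := Metric.ball 0 1

/-- `f` is a ramified covering of local degree `k` at `x`: in suitable local homeomorphic
coordinates identifying neighborhoods of `x` and `f x` with the unit disk (sending `x` and
`f x` to `0`), the map `f` becomes `z ↦ z ^ k`. -/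
def IsRamifiedAt (f : Sph → Sph) (x : Sph) (k : ℕ) : Prop :=
  0 < k ∧ ∃ (U V : Set Sph) (hx : x ∈ U) (hfx : f x ∈ V) (hmap : Set.MapsTo f U V),
    IsOpen U ∧ IsOpen V ∧
      ∃ (φ : U ≃ₜ unitDisk) (ψ : V ≃ₜ unitDisk),
        (φ ⟨x, hx⟩ : ℂ) = 0 ∧ (ψ ⟨f x, hfx⟩ : ℂ) = 0 ∧
          ∀ z : U, (ψ ⟨f z, hmap z.2⟩ : ℂ) = (φ z : ℂ) ^ k

/-- `f` is a ramified covering: a continuous map that is a ramified covering of some local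
degree at every point. -/
def IsRamifiedCovering (f : Sph → Sph) : Prop :=
  Continuous f ∧ ∀ x : Sph, ∃ k : ℕ, IsRamifiedAt f x k

/-- A critical point of `f` is a point of local degree at least 2. -/
def IsCriticalPt (f : Sph → Sph) (x : Sph) : Prop := ∃ k, 2 ≤ k ∧ IsRamifiedAt f x k

/-- A critical value of `f` is the image of a critical point. -/
def IsCriticalValue (f : Sph → Sph) (y : Sph) : Prop := ∃ x, IsCriticalPt f x ∧ f x = y

/-- `f` is a ramified covering of degree 2: every point that is not a critical value has
exactly two preimages. -/
def IsDegreeTwoRamifiedCovering (f : Sph → Sph) : Prop :=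
  IsRamifiedCovering f ∧ ∀ y : Sph, ¬IsCriticalValue f y → Nat.card (f ⁻¹' {y} : Set Sph) = 2

-- ===== auxiliary development =====

namespace Complex

/-- compatibility: the complex absolute value as an `AbsoluteValue` -/
def abs : AbsoluteValue ℂ ℝ := NormedField.toAbsoluteValue ℂ

lemma norm_eq_abs (z : ℂ) : ‖z‖ = abs z := rfl

lemma abs_ofReal (r : ℝ) : abs (r : ℂ) = |r| := by
  show ‖(r : ℂ)‖ = |r|
  simp

end Complex

lemma mem_unitDisk {w : ℂ} : w ∈ unitDisk ↔ Complex.abs w < 1 := by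
  simp [unitDisk, Metric.mem_ball, dist_zero_right, Complex.norm_eq_abs]

lemma zero_mem_unitDisk : (0 : ℂ) ∈ unitDisk := by simp [mem_unitDisk]

lemma pow_mem_unitDisk {w : ℂ} (hw : w ∈ unitDisk) {k : ℕ} (hk : 0 < k) :
    w ^ k ∈ unitDisk := by
  rw [mem_unitDisk] at *
  rw [map_pow]
  exact pow_lt_one₀ (Complex.abs.nonneg _) hw hk.ne'

lemma neg_mem_unitDisk {w : ℂ} (hw : w ∈ unitDisk) : -w ∈ unitDisk := by
  rw [mem_unitDisk] at *; simpa using hw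

structure Chart (g : Sph → Sph) (x : Sph) (k : ℕ) where
  hk : 0 < k
  U : Set Sph
  V : Set Sph
  hx : x ∈ U
  hfx : g x ∈ V
  hmap : Set.MapsTo g U V
  hU : IsOpen U
  hV : IsOpen V
  φ : U ≃ₜ unitDisk
  ψ : V ≃ₜ unitDisk
  hφx : (φ ⟨x, hx⟩ : ℂ) = 0
  hψx : (ψ ⟨g x, hfx⟩ : ℂ) = 0
  heq : ∀ z : U, (ψ ⟨g z, hmap z.2⟩ : ℂ) = (φ z : ℂ) ^ k

lemma IsRamifiedAt.chart {g : Sph → Sph} {x : Sph} {k : ℕ} (h : IsRamifiedAt g x k) :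
    Nonempty (Chart g x k) := by
  obtain ⟨hk, U, V, hx, hfx, hmap, hU, hV, φ, ψ, h1, h2, h3⟩ := h
  exact ⟨⟨hk, U, V, hx, hfx, hmap, hU, hV, φ, ψ, h1, h2, h3⟩⟩

namespace Chart

variable {g : Sph → Sph} {x : Sph} {k : ℕ} (C : Chart g x k)

/-- the point `x` as an element of `U` -/
def xU : C.U := ⟨x, C.hx⟩

lemma phi_symm_zero : C.φ.symm ⟨0, zero_mem_unitDisk⟩ = C.xU := by
  apply C.φ.injective
  rw [Homeomorph.apply_symm_apply]
  exact (Subtype.ext C.hφx).symm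

/-- if two chart points have kth powers of coordinates equal, their images agree -/
lemma g_eq_of_pow_eq {z w : C.U} (h : ((C.φ z : ℂ)) ^ k = ((C.φ w : ℂ)) ^ k) :
    g z = g w := by
  have h1 := C.heq z
  have h2 := C.heq w
  have : (C.ψ ⟨g z, C.hmap z.2⟩ : ℂ) = (C.ψ ⟨g w, C.hmap w.2⟩ : ℂ) := by rw [h1, h2, h]
  have := C.ψ.injective (Subtype.ext this)
  exact congrArg Subtype.val this

/-- conversely -/
lemma pow_eq_of_g_eq {z w : C.U} (h : g z = g w) :
    ((C.φ z : ℂ)) ^ k = ((C.φ w : ℂ)) ^ k := by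
  have h1 := C.heq z
  have h2 := C.heq w
  rw [← h1, ← h2]
  congr 2
  exact Subtype.ext h

lemma g_apply_symm (w : unitDisk) :
    g (C.φ.symm w) = (C.ψ.symm ⟨(w : ℂ) ^ k, pow_mem_unitDisk w.2 C.hk⟩ : C.V) := by
  set z : C.U := C.φ.symm w with hz
  have h1 := C.heq z
  have hw : (C.φ z : ℂ) = w := by rw [hz, Homeomorph.apply_symm_apply]
  rw [hw] at h1
  have : (⟨g z, C.hmap z.2⟩ : C.V) = C.ψ.symm ⟨(w : ℂ) ^ k, pow_mem_unitDisk w.2 C.hk⟩ := by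
    apply C.ψ.injective
    rw [Homeomorph.apply_symm_apply]
    exact Subtype.ext h1
  exact congrArg Subtype.val this

/-- g maps U onto V -/
lemma surjOn : Set.SurjOn g C.U C.V := by
  intro v hv
  obtain ⟨r, hr⟩ := IsAlgClosed.exists_pow_nat_eq ((C.ψ ⟨v, hv⟩ : ℂ)) C.hk
  have hrd : r ∈ unitDisk := by
    rw [mem_unitDisk]
    by_contra h
    push_neg at h
    have : (1:ℝ) ≤ Complex.abs r ^ k := one_le_pow₀ h
    rw [← map_pow, hr] at this
    exact absurd (mem_unitDisk.1 (C.ψ ⟨v, hv⟩).2) (by linarith)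
  refine ⟨C.φ.symm ⟨r, hrd⟩, (C.φ.symm ⟨r, hrd⟩).2, ?_⟩
  rw [C.g_apply_symm ⟨r, hrd⟩]
  have : (⟨r, hrd⟩ : unitDisk) = ⟨r, hrd⟩ := rfl
  have hv' : (C.ψ.symm ⟨r ^ k, pow_mem_unitDisk hrd C.hk⟩ : C.V) = ⟨v, hv⟩ := by
    apply C.ψ.injective
    rw [Homeomorph.apply_symm_apply]
    exact Subtype.ext hr
  rw [hv']

end Chart

-- ===== local injectivity =====

lemma abs_eq_one_of_pow_eq_one {ζ : ℂ} {k : ℕ} (h : ζ ^ k = 1) (hk : 0 < k) :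
    Complex.abs ζ = 1 := by
  have h' : Complex.abs ζ ^ k = 1 := by rw [← map_pow, h, map_one]
  rcases lt_trichotomy (Complex.abs ζ) 1 with hlt | heq | hgt
  · exact absurd h' (by have := pow_lt_one₀ (Complex.abs.nonneg _) hlt hk.ne'; linarith)
  · exact heq
  · exact absurd h' (by have := one_lt_pow₀ hgt hk.ne'; linarith)

/-- `g` is injective on a neighborhood of any chart point with nonzero coordinate. -/
lemma Chart.injOn_nhd {g : Sph → Sph} {x : Sph} {k : ℕ} (C : Chart g x k)
    {z : Sph} (hz : z ∈ C.U) (hz0 : (C.φ ⟨z, hz⟩ : ℂ) ≠ 0) :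
    ∃ O ∈ 𝓝 z, Set.InjOn g O := by
  classical
  set w0 : ℂ := (C.φ ⟨z, hz⟩ : ℂ) with hw0
  by_cases hk1 : k = 1
  · -- k = 1 : g is injective on all of U
    refine ⟨C.U, C.hU.mem_nhds hz, ?_⟩
    intro p hp q hq hpq
    have h := C.pow_eq_of_g_eq (z := ⟨p, hp⟩) (w := ⟨q, hq⟩) hpq
    subst hk1
    rw [pow_one, pow_one] at h
    exact congrArg Subtype.val (C.φ.injective (Subtype.ext h))
  · have hk2 : 2 ≤ k := by have := C.hk; omega
    -- the finset of k-th roots of unity other than 1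
    set F : Finset ℂ := (Polynomial.nthRootsFinset k (1 : ℂ)).erase 1 with hF
    have hFne : F.Nonempty := by
      refine ⟨Complex.exp (2 * Real.pi * Complex.I / k), ?_⟩
      have hprim := Complex.isPrimitiveRoot_exp k (by omega)
      rw [hF, Finset.mem_erase, Polynomial.mem_nthRootsFinset C.hk (1 : ℂ)]
      exact ⟨hprim.ne_one hk2, hprim.pow_eq_one⟩
    set m : ℝ := F.inf' hFne (fun ζ => Complex.abs (1 - ζ)) with hm
    have hm0 : 0 < m := by
      rw [hm, Finset.lt_inf'_iff]
      intro ζ hζ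
      rw [hF, Finset.mem_erase] at hζ
      simpa [sub_eq_zero] using fun h => hζ.1 h.symm
    have hm2 : m ≤ 2 := by
      obtain ⟨ζ0, hζ0⟩ := hFne
      have h1 : Complex.abs ζ0 = 1 := by
        rw [hF, Finset.mem_erase, Polynomial.mem_nthRootsFinset C.hk (1 : ℂ)] at hζ0
        exact abs_eq_one_of_pow_eq_one hζ0.2 C.hk
      calc m ≤ Complex.abs (1 - ζ0) := Finset.inf'_le _ hζ0
        _ ≤ Complex.abs 1 + Complex.abs ζ0 := by
            simpa [sub_eq_add_neg] using Complex.abs.add_le 1 (-ζ0)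
        _ = 2 := by rw [h1, map_one]; norm_num
    have hw0' : 0 < Complex.abs w0 := by
      rwa [AbsoluteValue.pos_iff]
    set r : ℝ := m * Complex.abs w0 / 4 with hr
    have hr0 : 0 < r := by positivity
    set O : Set Sph := Subtype.val '' (C.φ ⁻¹' {w : unitDisk | Complex.abs ((w : ℂ) - w0) < r}) with hO
    have hOopen : IsOpen O := by
      apply C.hU.isOpenMap_subtype_val
      apply C.φ.continuous.isOpen_preimage
      have : IsOpen {w : ℂ | Complex.abs (w - w0) < r} := by
        simpa [Metric.ball, Complex.dist_eq, Complex.norm_eq_abs] using Metric.isOpen_ball (x := w0) (ε := r)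
      exact this.preimage continuous_subtype_val
    refine ⟨O, hOopen.mem_nhds ⟨⟨z, hz⟩, by simp [hr0, ← hw0], rfl⟩, ?_⟩
    rintro p ⟨p', hp', rfl⟩ q ⟨q', hq', rfl⟩ hpq
    have hpow := C.pow_eq_of_g_eq hpq
    set a : ℂ := (C.φ p' : ℂ) with ha
    set b : ℂ := (C.φ q' : ℂ) with hb
    have hap : Complex.abs (a - w0) < r := hp'
    have hbq : Complex.abs (b - w0) < r := hq'
    have hb0 : b ≠ 0 := by
      intro h
      rw [h] at hbq
      simp only [zero_sub, map_neg_eq_map] at hbq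
      rw [hr] at hbq
      nlinarith [hw0', hm0, hm2]
    have hζ : (a / b) ^ k = 1 := by
      rw [div_pow, hpow, div_self (pow_ne_zero _ hb0)]
    by_cases hab : a = b
    · exact congrArg Subtype.val (C.φ.injective (Subtype.ext hab))
    · exfalso
      have hζF : a / b ∈ F := by
        rw [hF, Finset.mem_erase, Polynomial.mem_nthRootsFinset C.hk (1 : ℂ)]
        refine ⟨fun h => hab ?_, hζ⟩
        field_simp at h
        exact h
      have hmle : m ≤ Complex.abs (1 - a / b) := Finset.inf'_le _ hζF
      have key : Complex.abs (b - a) = Complex.abs (1 - a / b) * Complex.abs b := by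
        rw [← map_mul]
        congr 1
        field_simp
      have habs : Complex.abs (b - a) < 2 * r := by
        have h6 : Complex.abs (b - a) ≤ Complex.abs ((b - w0)) + Complex.abs ((w0 - a)) := by
          have := Complex.abs.add_le (b - w0) (w0 - a)
          have he : (b - w0) + (w0 - a) = b - a := by ring
          rwa [he] at this
        have h7 : Complex.abs (w0 - a) = Complex.abs (a - w0) := Complex.abs.map_sub _ _
        linarith
      have hblow : Complex.abs w0 - r ≤ Complex.abs b := by
        have h5 := Complex.abs.add_le (w0 - b) b
        have he : (w0 - b) + b = w0 := by ring
        rw [he] at h5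
        have h7 : Complex.abs (w0 - b) = Complex.abs (b - w0) := Complex.abs.map_sub _ _
        linarith
      have : m * (Complex.abs w0 - r) ≤ Complex.abs (b - a) := by
        rw [key]
        have h1 : 0 ≤ Complex.abs w0 - r := by rw [hr]; nlinarith
        exact mul_le_mul hmle hblow h1 (by positivity)
      rw [hr] at this habs
      nlinarith

-- ===== critical points are not locally injective =====

lemma IsCriticalPt.not_injOn {g : Sph → Sph} {x : Sph} (hx : IsCriticalPt g x)
    {O : Set Sph} (hO : O ∈ 𝓝 x) : ¬Set.InjOn g O := by
  obtain ⟨k, hk2, hram⟩ := hx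
  obtain ⟨C⟩ := hram.chart
  intro hinj
  -- φ.symm is continuous at the zero point, whose value is x
  have hcont : ContinuousAt (fun w : unitDisk => (C.φ.symm w : Sph)) ⟨0, zero_mem_unitDisk⟩ :=
    (continuous_subtype_val.comp C.φ.symm.continuous).continuousAt
  have hval : (C.φ.symm ⟨0, zero_mem_unitDisk⟩ : Sph) = x := by
    rw [C.phi_symm_zero]; rfl
  rw [ContinuousAt, hval] at hcont
  have hO' : (fun w : unitDisk => (C.φ.symm w : Sph)) ⁻¹' O ∈ 𝓝 (⟨0, zero_mem_unitDisk⟩ : unitDisk) := hcont hO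
  rw [Metric.mem_nhds_iff] at hO'
  obtain ⟨ε, hε, hball⟩ := hO'
  set t : ℝ := min (ε / 2) (1 / 2) with ht
  have ht0 : 0 < t := by positivity
  have ht1 : t < 1 := lt_of_le_of_lt (min_le_right _ _) (by norm_num)
  have htε : t < ε := lt_of_le_of_lt (min_le_left _ _) (by linarith)
  set ω : ℂ := Complex.exp (2 * Real.pi * Complex.I / k) with hω
  have hprim := Complex.isPrimitiveRoot_exp k (by omega)
  have hω1 : Complex.abs ω = 1 := abs_eq_one_of_pow_eq_one hprim.pow_eq_one (by omega)
  have hmem1 : (t : ℂ) ∈ unitDisk := by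
    rw [mem_unitDisk]
    simpa [Complex.abs_ofReal, abs_of_pos ht0] using ht1
  have hmem2 : ω * t ∈ unitDisk := by
    rw [mem_unitDisk, map_mul, hω1, one_mul]
    simpa [Complex.abs_ofReal, abs_of_pos ht0] using ht1
  have hd1 : (⟨(t : ℂ), hmem1⟩ : unitDisk) ∈ Metric.ball (⟨0, zero_mem_unitDisk⟩ : unitDisk) ε := by
    rw [Metric.mem_ball, Subtype.dist_eq, Complex.dist_eq, sub_zero]
    simpa [Complex.abs_ofReal, abs_of_pos ht0] using htε
  have hd2 : (⟨ω * t, hmem2⟩ : unitDisk) ∈ Metric.ball (⟨0, zero_mem_unitDisk⟩ : unitDisk) ε := by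
    rw [Metric.mem_ball, Subtype.dist_eq, Complex.dist_eq, sub_zero, Complex.norm_eq_abs, map_mul, hω1, one_mul]
    simpa [Complex.abs_ofReal, abs_of_pos ht0] using htε
  set p : Sph := (C.φ.symm ⟨(t : ℂ), hmem1⟩ : Sph)
  set q : Sph := (C.φ.symm ⟨ω * t, hmem2⟩ : Sph)
  have hpO : p ∈ O := hball hd1
  have hqO : q ∈ O := hball hd2
  have hgpq : g p = g q := by
    rw [C.g_apply_symm, C.g_apply_symm]
    have harg : ((t : ℂ)) ^ k = (ω * t) ^ k := by
      rw [mul_pow, hprim.pow_eq_one, one_mul]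
    exact congrArg (fun a : unitDisk => (C.ψ.symm a : Sph)) (Subtype.ext harg)
  have hpq : p ≠ q := by
    intro h
    have := C.φ.symm.injective (Subtype.ext h)
    have h2 : (t : ℂ) = ω * t := congrArg Subtype.val this
    have ht0' : (t : ℂ) ≠ 0 := by
      simpa using ht0.ne'
    have : ω = 1 := by
      have h3 : ω * (t : ℂ) = 1 * (t : ℂ) := by rw [one_mul, ← h2]
      exact mul_right_cancel₀ ht0' h3
    exact hprim.ne_one hk2 this
  exact hpq (hinj hpO hqO hgpq)

/-- points of a chart with nonzero coordinate are not critical -/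
lemma Chart.not_crit {g : Sph → Sph} {x : Sph} {k : ℕ} (C : Chart g x k)
    {z : Sph} (hz : z ∈ C.U) (hz0 : (C.φ ⟨z, hz⟩ : ℂ) ≠ 0) : ¬IsCriticalPt g z := by
  intro hcrit
  obtain ⟨O, hO, hinj⟩ := C.injOn_nhd hz hz0
  exact hcrit.not_injOn hO hinj

/-- the set of critical points is finite -/
lemma crit_finite {g : Sph → Sph} (hg : IsRamifiedCovering g) :
    {x : Sph | IsCriticalPt g x}.Finite := by
  classical
  have key : ∀ x : Sph, ∃ O : Set Sph, O ∈ 𝓝 x ∧ ∀ z ∈ O, IsCriticalPt g z → z = x := by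
    intro x
    obtain ⟨k, hram⟩ := hg.2 x
    obtain ⟨C⟩ := hram.chart
    refine ⟨C.U, C.hU.mem_nhds C.hx, fun z hz hcrit => ?_⟩
    by_contra hne
    have hz0 : (C.φ ⟨z, hz⟩ : ℂ) ≠ 0 := by
      intro h0
      apply hne
      have : (⟨z, hz⟩ : C.U) = ⟨x, C.hx⟩ := C.φ.injective (Subtype.ext (by rw [h0, C.hφx]))
      exact congrArg Subtype.val this
    exact C.not_crit hz hz0 hcrit
  choose O hO hOspec using key
  obtain ⟨t, _, ht⟩ := isCompact_univ.elim_nhds_subcover O (fun x _ => hO x)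
  apply Set.Finite.subset t.finite_toSet
  intro z hz
  obtain ⟨x, hxt, hzO⟩ := Set.mem_iUnion₂.1 (ht (Set.mem_univ z))
  rw [← hOspec x z hzO hz] at hxt
  exact hxt

lemma critval_finite {g : Sph → Sph} (hg : IsRamifiedCovering g) :
    {y : Sph | IsCriticalValue g y}.Finite := by
  have : {y : Sph | IsCriticalValue g y} ⊆ g '' {x : Sph | IsCriticalPt g x} := by
    rintro y ⟨x, hx, rfl⟩
    exact ⟨x, hx, rfl⟩
  exact ((crit_finite hg).image g).subset this

/-- properness: preimages of points can be enclosed in open sets -/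
lemma exists_nhd_preimage_subset {g : Sph → Sph} (hgc : Continuous g) {y : Sph}
    {W : Set Sph} (hW : IsOpen W) (hfib : g ⁻¹' {y} ⊆ W) :
    ∃ Ω : Set Sph, IsOpen Ω ∧ y ∈ Ω ∧ g ⁻¹' Ω ⊆ W := by
  refine ⟨(g '' Wᶜ)ᶜ, ?_, ?_, ?_⟩
  · rw [isOpen_compl_iff]
    exact ((hW.isClosed_compl.isCompact).image hgc).isClosed
  · rintro ⟨z, hz, hgz⟩
    exact hz (hfib hgz)
  · intro z hz
    by_contra hzW
    exact hz ⟨z, hzW, rfl⟩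

-- ===== finding good parameters, degree bound =====

lemma unitDisk_infinite : (Metric.ball (0:ℂ) 1).Infinite :=
  ((convex_ball (0:ℂ) 1).isPreconnected).infinite_of_nontrivial
    ⟨0, by simp, 1/2, by norm_num [Metric.mem_ball, Complex.dist_eq], by norm_num⟩

lemma finite_of_card_two {s : Set Sph} (h : Nat.card s = 2) : s.Finite := by
  have h2 := Nat.card_ne_zero (α := s)
  rw [h] at h2
  simp only [ne_eq, OfNat.ofNat_ne_zero, not_false_eq_true, true_iff] at h2
  have : Finite s := h2.2
  exact Set.toFinite s

lemma eq_pair_of_card_two {s : Set Sph} {a b : Sph} (ha : a ∈ s) (hb : b ∈ s)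
    (hab : a ≠ b) (h : Nat.card s = 2) : s = {a, b} := by
  refine (Set.eq_of_subset_of_ncard_le (by
    rw [Set.insert_subset_iff]; exact ⟨ha, Set.singleton_subset_iff.2 hb⟩) ?_
    (finite_of_card_two h)).symm
  rw [Set.ncard_pair hab, ← Nat.card_coe_set_eq, h]

lemma exists_good_param {g : Sph → Sph} (hg : IsRamifiedCovering g)
    {x : Sph} {k : ℕ} (C : Chart g x k) {δ : ℝ} (hδ : 0 < δ) :
    ∃ (s : ℂ) (hs : s ∈ unitDisk), s ≠ 0 ∧ Complex.abs s < δ ∧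
      ¬IsCriticalValue g ((C.ψ.symm ⟨s ^ k, pow_mem_unitDisk hs C.hk⟩ : C.V) : Sph) := by
  classical
  set T : Set ℂ := Subtype.val '' (C.ψ '' {v : C.V | IsCriticalValue g ↑v}) with hT
  have hTfin : T.Finite := by
    apply Set.Finite.image
    apply Set.Finite.image
    have : {v : C.V | IsCriticalValue g ↑v} = Subtype.val ⁻¹' {y : Sph | IsCriticalValue g y} := rfl
    rw [this]
    exact (critval_finite hg).preimage Subtype.val_injective.injOn
  set Bad : Set ℂ := {s : ℂ | s ^ k ∈ T} with hBad
  have hBadfin : Bad.Finite := by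
    have : Bad ⊆ ⋃ t ∈ T, {s : ℂ | s ^ k = t} := by
      intro s hs; exact Set.mem_biUnion hs rfl
    refine Set.Finite.subset (hTfin.biUnion fun t _ => ?_) this
    have hne : (Polynomial.X ^ k - Polynomial.C t : Polynomial ℂ) ≠ 0 :=
      Polynomial.X_pow_sub_C_ne_zero C.hk t
    have := Polynomial.finite_setOf_isRoot hne
    refine this.subset fun s hs => ?_
    simp only [Set.mem_setOf_eq] at hs ⊢
    simp [Polynomial.IsRoot, sub_eq_zero, hs]
  have hball : (Metric.ball (0:ℂ) (min δ 1)).Infinite :=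
    ((convex_ball (0:ℂ) (min δ 1)).isPreconnected).infinite_of_nontrivial
      ⟨0, by simp [hδ], ((min δ 1 / 2 : ℝ) : ℂ), by
        simp only [Metric.mem_ball, Complex.dist_eq, sub_zero, Complex.norm_eq_abs, Complex.abs_ofReal]
        have h01 : (0:ℝ) < min δ 1 := by positivity
        rw [abs_of_pos (by positivity)]
        linarith
        , by
        have h01 : (0:ℝ) < min δ 1 := by positivity
        intro h
        rw [Complex.ext_iff] at h
        simp at h
        linarith⟩
  obtain ⟨s, hsball, hsbad⟩ := (hball.diff (hBadfin.union (Set.finite_singleton 0))).nonempty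
  simp only [Set.mem_union, Set.mem_singleton_iff, not_or] at hsbad
  have hs0 : s ≠ 0 := hsbad.2
  have hsδ : Complex.abs s < δ := by
    have := Metric.mem_ball.1 hsball
    rw [Complex.dist_eq, sub_zero] at this
    exact lt_of_lt_of_le this (min_le_left _ _)
  have hs1 : s ∈ unitDisk := by
    rw [mem_unitDisk]
    have := Metric.mem_ball.1 hsball
    rw [Complex.dist_eq, sub_zero] at this
    exact lt_of_lt_of_le this (min_le_right _ _)
  refine ⟨s, hs1, hs0, hsδ, fun hcv => ?_⟩
  apply hsbad.1
  rw [hBad, Set.mem_setOf_eq, hT]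
  exact ⟨C.ψ (C.ψ.symm ⟨s ^ k, pow_mem_unitDisk hs1 C.hk⟩),
    ⟨C.ψ.symm ⟨s ^ k, pow_mem_unitDisk hs1 C.hk⟩, hcv, rfl⟩,
    by rw [Homeomorph.apply_symm_apply]⟩

lemma IsRamifiedAt.le_two {g : Sph → Sph} (hg : IsDegreeTwoRamifiedCovering g)
    {x : Sph} {k : ℕ} (h : IsRamifiedAt g x k) : k ≤ 2 := by
  obtain ⟨C⟩ := h.chart
  obtain ⟨s, hs, hs0, -, hncv⟩ := exists_good_param hg.1 C (δ := 1) one_pos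
  set w : Sph := ((C.ψ.symm ⟨s ^ k, pow_mem_unitDisk hs C.hk⟩ : C.V) : Sph) with hw
  have hcard : Nat.card (g ⁻¹' {w} : Set Sph) = 2 := hg.2 w hncv
  have hfin : (g ⁻¹' {w} : Set Sph).Finite := finite_of_card_two hcard
  have : Finite (g ⁻¹' {w} : Set Sph) := hfin
  set ω : ℂ := Complex.exp (2 * Real.pi * Complex.I / k) with hω
  have hprim := Complex.isPrimitiveRoot_exp k C.hk.ne'
  have hω1 : Complex.abs ω = 1 := abs_eq_one_of_pow_eq_one hprim.pow_eq_one C.hk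
  have hmem : ∀ j : ℕ, ω ^ j * s ∈ unitDisk := by
    intro j
    rw [mem_unitDisk, map_mul, map_pow, hω1, one_pow, one_mul]
    exact mem_unitDisk.1 hs
  have hgval : ∀ j : ℕ, g ((C.φ.symm ⟨ω ^ j * s, hmem j⟩ : C.U) : Sph) = w := by
    intro j
    rw [C.g_apply_symm]
    have harg : (ω ^ j * s) ^ k = s ^ k := by
      rw [mul_pow, ← pow_mul, mul_comm j k, pow_mul, hprim.pow_eq_one, one_pow, one_mul]
    exact congrArg (fun a : unitDisk => (C.ψ.symm a : Sph)) (Subtype.ext harg)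
  set f : Fin k → (g ⁻¹' {w} : Set Sph) :=
    fun j => ⟨(C.φ.symm ⟨ω ^ (j : ℕ) * s, hmem j⟩ : C.U), hgval j⟩ with hf
  have hinj : Function.Injective f := by
    intro i j hij
    have h1 := congrArg (fun a : (g ⁻¹' {w} : Set Sph) => (a : Sph)) hij
    simp only [hf] at h1
    have h2 := C.φ.symm.injective (Subtype.ext h1)
    have h3 : ω ^ (i : ℕ) * s = ω ^ (j : ℕ) * s := congrArg Subtype.val h2
    have h4 : ω ^ (i : ℕ) = ω ^ (j : ℕ) := mul_right_cancel₀ hs0 h3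
    exact Fin.ext (hprim.pow_inj i.isLt j.isLt h4)
  have := Nat.card_le_card_of_injective f hinj
  rwa [Nat.card_eq_fintype_card, Fintype.card_fin, hcard] at this

lemma neg_pow_two_eq (s : ℂ) : (-s) ^ 2 = s ^ 2 := by ring

-- ===== fiber over a critical value is a singleton =====

lemma fiber_of_critval {g : Sph → Sph} (hg : IsDegreeTwoRamifiedCovering g)
    {y : Sph} (hy : IsCriticalValue g y) :
    ∃ c : Sph, IsCriticalPt g c ∧ g ⁻¹' {y} = {c} := by
  obtain ⟨c, hc, hgc⟩ := hy
  subst hgc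
  refine ⟨c, hc, ?_⟩
  apply Set.eq_singleton_iff_unique_mem.2
  refine ⟨rfl, ?_⟩
  intro d hd
  simp only [Set.mem_preimage, Set.mem_singleton_iff] at hd
  -- hd : g d = g c ; show d = c
  obtain ⟨k, hk2, hram⟩ := hc
  have hk2' : k = 2 := le_antisymm (hram.le_two hg) hk2
  subst hk2'
  obtain ⟨C⟩ := hram.chart
  obtain ⟨k₂, hram₂⟩ := hg.1.2 d
  obtain ⟨C₂⟩ := hram₂.chart
  by_contra hne
  have hdc : 0 < dist c d := dist_pos.2 fun h => hne h.symm
  set ε : ℝ := dist c d with hε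
  -- we derive dist c d < ε, a contradiction
  suffices h : dist c d < ε by exact lt_irrefl _ h
  -- δ₁ : control for C.φ.symm near 0
  have hδ₁ : ∃ δ₁ > 0, ∀ w : unitDisk, Complex.abs (w : ℂ) < δ₁ →
      dist ((C.φ.symm w : C.U) : Sph) c < ε / 2 := by
    have hcont : ContinuousAt (fun w : unitDisk => ((C.φ.symm w : C.U) : Sph))
        ⟨0, zero_mem_unitDisk⟩ :=
      (continuous_subtype_val.comp C.φ.symm.continuous).continuousAt
    rw [Metric.continuousAt_iff] at hcont
    obtain ⟨δ, hδ0, hδ⟩ := hcont (ε / 2) (by positivity)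
    refine ⟨δ, hδ0, fun w hw => ?_⟩
    have h1 : dist w (⟨0, zero_mem_unitDisk⟩ : unitDisk) < δ := by
      rw [Subtype.dist_eq, Complex.dist_eq, sub_zero]; exact hw
    have h2 := hδ h1
    rwa [C.phi_symm_zero] at h2
  obtain ⟨δ₁, hδ₁0, hδ₁⟩ := hδ₁
  -- δ₂ : control for C₂.φ.symm near 0, with δ₂ ≤ 1
  have hδ₂ : ∃ δ₂ > 0, δ₂ ≤ 1 ∧ ∀ w : unitDisk, Complex.abs (w : ℂ) < δ₂ →
      dist ((C₂.φ.symm w : C₂.U) : Sph) d < ε / 2 := by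
    have hcont : ContinuousAt (fun w : unitDisk => ((C₂.φ.symm w : C₂.U) : Sph))
        ⟨0, zero_mem_unitDisk⟩ :=
      (continuous_subtype_val.comp C₂.φ.symm.continuous).continuousAt
    rw [Metric.continuousAt_iff] at hcont
    obtain ⟨δ, hδ0, hδ⟩ := hcont (ε / 2) (by positivity)
    refine ⟨min δ 1, by positivity, min_le_right _ _, fun w hw => ?_⟩
    have h1 : dist w (⟨0, zero_mem_unitDisk⟩ : unitDisk) < δ := by
      rw [Subtype.dist_eq, Complex.dist_eq, sub_zero]
      exact lt_of_lt_of_le hw (min_le_left _ _)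
    have h2 := hδ h1
    rwa [C₂.phi_symm_zero] at h2
  obtain ⟨δ₂, hδ₂0, hδ₂1, hδ₂⟩ := hδ₂
  -- ρ : ball around g c inside C₂.V (note g d = g c)
  have hgcV₂ : g c ∈ C₂.V := hd ▸ C₂.hfx
  obtain ⟨ρ, hρ0, hρ⟩ := Metric.isOpen_iff.1 C₂.hV (g c) hgcV₂
  -- δ₃ : control for C₂.ψ near g c
  have hδ₃ : ∃ δ₃ > 0, ∀ (v : Sph) (hv : v ∈ C₂.V), dist v (g c) < δ₃ →
      Complex.abs ((C₂.ψ ⟨v, hv⟩ : ℂ)) < δ₂ ^ k₂ := by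
    have hcont : ContinuousAt (fun v : C₂.V => (C₂.ψ v : ℂ)) ⟨g c, hgcV₂⟩ :=
      (continuous_subtype_val.comp C₂.ψ.continuous).continuousAt
    rw [Metric.continuousAt_iff] at hcont
    obtain ⟨δ, hδ0, hδ⟩ := hcont (δ₂ ^ k₂) (by positivity)
    refine ⟨δ, hδ0, fun v hv hvd => ?_⟩
    have h1 : dist (⟨v, hv⟩ : C₂.V) ⟨g c, hgcV₂⟩ < δ := by
      rw [Subtype.dist_eq]; exact hvd
    have h2 := hδ h1
    have h3 : (C₂.ψ ⟨g c, hgcV₂⟩ : ℂ) = 0 := by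
      have : (⟨g c, hgcV₂⟩ : C₂.V) = ⟨g d, C₂.hfx⟩ := Subtype.ext hd.symm
      rw [this, C₂.hψx]
    rwa [Complex.dist_eq, h3, sub_zero] at h2
  obtain ⟨δ₃, hδ₃0, hδ₃⟩ := hδ₃
  -- δ₄ : control for C.ψ.symm near 0
  have hδ₄ : ∃ δ₄ > 0, ∀ w : unitDisk, Complex.abs (w : ℂ) < δ₄ →
      dist ((C.ψ.symm w : C.V) : Sph) (g c) < min δ₃ ρ := by
    have hcont : ContinuousAt (fun w : unitDisk => ((C.ψ.symm w : C.V) : Sph))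
        ⟨0, zero_mem_unitDisk⟩ :=
      (continuous_subtype_val.comp C.ψ.symm.continuous).continuousAt
    rw [Metric.continuousAt_iff] at hcont
    obtain ⟨δ, hδ0, hδ⟩ := hcont (min δ₃ ρ) (by positivity)
    refine ⟨δ, hδ0, fun w hw => ?_⟩
    have h1 : dist w (⟨0, zero_mem_unitDisk⟩ : unitDisk) < δ := by
      rw [Subtype.dist_eq, Complex.dist_eq, sub_zero]; exact hw
    have h2 := hδ h1
    have h3 : (C.ψ.symm ⟨0, zero_mem_unitDisk⟩ : C.V) = ⟨g c, C.hfx⟩ := by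
      apply C.ψ.injective
      rw [Homeomorph.apply_symm_apply]
      exact (Subtype.ext C.hψx).symm
    rwa [h3] at h2
  obtain ⟨δ₄, hδ₄0, hδ₄⟩ := hδ₄
  -- choose a good parameter s
  obtain ⟨s, hs, hs0, hsδ, hncv⟩ :=
    exists_good_param hg.1 C (δ := min δ₁ (min 1 δ₄)) (by positivity)
  have hsδ₁ : Complex.abs s < δ₁ := lt_of_lt_of_le hsδ (min_le_left _ _)
  have hs1 : Complex.abs s ≤ 1 :=
    le_of_lt (lt_of_lt_of_le hsδ (le_trans (min_le_right _ _) (min_le_left _ _)))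
  have hsδ₄ : Complex.abs s < δ₄ := lt_of_lt_of_le hsδ (le_trans (min_le_right _ _) (min_le_right _ _))
  set w : Sph := ((C.ψ.symm ⟨s ^ 2, pow_mem_unitDisk hs C.hk⟩ : C.V) : Sph) with hw
  have hs2δ₄ : Complex.abs (s ^ 2) < δ₄ := by
    rw [map_pow]
    calc Complex.abs s ^ 2 ≤ Complex.abs s := by nlinarith [Complex.abs.nonneg s]
      _ < δ₄ := hsδ₄
  have hwy : dist w (g c) < min δ₃ ρ := hδ₄ _ hs2δ₄
  have hwV₂ : w ∈ C₂.V := hρ (Metric.mem_ball.2 (lt_of_lt_of_le hwy (min_le_right _ _)))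
  set s' : ℂ := (C₂.ψ ⟨w, hwV₂⟩ : ℂ) with hs'
  have habs' : Complex.abs s' < δ₂ ^ k₂ :=
    hδ₃ w hwV₂ (lt_of_lt_of_le hwy (min_le_left _ _))
  obtain ⟨r, hr⟩ := IsAlgClosed.exists_pow_nat_eq s' C₂.hk
  have habsr : Complex.abs r < δ₂ := by
    by_contra hcon
    push_neg at hcon
    have : δ₂ ^ k₂ ≤ Complex.abs r ^ k₂ := pow_le_pow_left₀ hδ₂0.le hcon k₂
    rw [← map_pow, hr] at this
    linarith
  have hrd : r ∈ unitDisk := mem_unitDisk.2 (lt_of_lt_of_le habsr hδ₂1)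
  set q : Sph := ((C₂.φ.symm ⟨r, hrd⟩ : C₂.U) : Sph) with hq
  have hqd : dist q d < ε / 2 := hδ₂ ⟨r, hrd⟩ habsr
  have hgq : g q = w := by
    rw [hq, C₂.g_apply_symm]
    have h1 : (⟨r ^ k₂, pow_mem_unitDisk hrd C₂.hk⟩ : unitDisk) = C₂.ψ ⟨w, hwV₂⟩ :=
      Subtype.ext hr
    rw [h1, Homeomorph.symm_apply_apply]
  -- the two preimages of w near c
  set p : Sph := ((C.φ.symm ⟨s, hs⟩ : C.U) : Sph) with hp
  set p' : Sph := ((C.φ.symm ⟨-s, neg_mem_unitDisk hs⟩ : C.U) : Sph) with hp'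
  have hpc : dist p c < ε / 2 := hδ₁ ⟨s, hs⟩ hsδ₁
  have hp'c : dist p' c < ε / 2 := by
    apply hδ₁
    simpa using hsδ₁
  have hgp : g p = w := by
    rw [hp, C.g_apply_symm]
  have hgp' : g p' = w := by
    rw [hp', C.g_apply_symm]
    exact congrArg (fun a : unitDisk => ((C.ψ.symm a : C.V) : Sph)) (Subtype.ext (neg_pow_two_eq s))
  have hpne : p ≠ p' := by
    intro h
    have h2 := C.φ.symm.injective (Subtype.ext h)
    have h3 : s = -s := congrArg Subtype.val h2
    have h4 : (2 : ℂ) * s = 0 := by linear_combination h3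
    have : s = 0 := by simpa using h4
    exact hs0 this
  have hfibw : g ⁻¹' {w} = {p, p'} :=
    eq_pair_of_card_two (by simpa [Set.mem_preimage] using hgp)
      (by simpa [Set.mem_preimage] using hgp') hpne (hg.2 w hncv)
  have hqfib : q ∈ g ⁻¹' {w} := by simpa [Set.mem_preimage] using hgq
  rw [hfibw] at hqfib
  have hqc : dist q c < ε / 2 := by
    rcases hqfib with h | h
    · rw [h]; exact hpc
    · rw [h]; exact hp'c
  calc dist c d ≤ dist c q + dist q d := dist_triangle _ _ _
    _ < ε / 2 + ε / 2 := by rw [dist_comm c q]; exact add_lt_add hqc hqd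
    _ = ε := by ring

-- ===== the deck transformation as a function =====

lemma other_exists_unique {g : Sph → Sph} (hg : IsDegreeTwoRamifiedCovering g) (x : Sph) :
    ∃! y : Sph, g y = g x ∧ ∀ z : Sph, g z = g x → z = x ∨ z = y := by
  by_cases hcv : IsCriticalValue g (g x)
  · obtain ⟨c, hc, hfib⟩ := fiber_of_critval hg hcv
    have hxc : x = c := by
      have : x ∈ g ⁻¹' {g x} := rfl
      rw [hfib] at this
      exact this
    refine ⟨x, ⟨rfl, fun z hz => ?_⟩, fun y hy => ?_⟩
    · have : z ∈ g ⁻¹' {g x} := hz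
      rw [hfib] at this
      left; rw [this, hxc]
    · have : y ∈ g ⁻¹' {g x} := hy.1
      rw [hfib] at this
      rw [this, hxc]
  · have hn2 : (g ⁻¹' {g x} : Set Sph).ncard = 2 := by
      rw [← Nat.card_coe_set_eq]; exact hg.2 (g x) hcv
    obtain ⟨a, b, hab, hfib⟩ := Set.ncard_eq_two.1 hn2
    have hmem : ∀ z : Sph, g z = g x → z = a ∨ z = b := fun z hz => by
      have : z ∈ ({a, b} : Set Sph) := by rw [← hfib]; exact hz
      simpa using this
    have hga : g a = g x := by
      have : a ∈ g ⁻¹' {g x} := by rw [hfib]; left; rfl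
      exact this
    have hgb : g b = g x := by
      have : b ∈ g ⁻¹' {g x} := by rw [hfib]; right; rfl
      exact this
    rcases hmem x rfl with hxa | hxb
    · -- x = a, the other point is b
      refine ⟨b, ⟨hgb, fun z hz => ?_⟩, fun y hy => ?_⟩
      · rcases hmem z hz with h | h
        · left; rw [h, hxa]
        · right; exact h
      · rcases hmem y hy.1 with h | h
        · exfalso
          rcases hy.2 b hgb with hb | hb
          · exact hab (by rw [← hxa, ← hb])
          · exact hab (by rw [← h, ← hb])
        · exact h
    · -- x = b, the other point is a
      refine ⟨a, ⟨hga, fun z hz => ?_⟩, fun y hy => ?_⟩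
      · rcases hmem z hz with h | h
        · right; exact h
        · left; rw [h, hxb]
      · rcases hmem y hy.1 with h | h
        · exact h
        · exfalso
          rcases hy.2 a hga with ha | ha
          · exact hab (by rw [ha]; exact hxb)
          · exact hab (by rw [ha, h])

/-- the deck transformation -/
def deck {g : Sph → Sph} (hg : IsDegreeTwoRamifiedCovering g) : Sph → Sph :=
  fun x => (other_exists_unique hg x).choose

lemma deck_spec {g : Sph → Sph} (hg : IsDegreeTwoRamifiedCovering g) (x : Sph) :
    g (deck hg x) = g x ∧ ∀ z : Sph, g z = g x → z = x ∨ z = deck hg x :=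
  (other_exists_unique hg x).choose_spec.1

lemma deck_uniq {g : Sph → Sph} (hg : IsDegreeTwoRamifiedCovering g) {x y : Sph}
    (h1 : g y = g x) (h2 : ∀ z : Sph, g z = g x → z = x ∨ z = y) : y = deck hg x :=
  (other_exists_unique hg x).choose_spec.2 y ⟨h1, h2⟩

lemma g_deck {g : Sph → Sph} (hg : IsDegreeTwoRamifiedCovering g) (x : Sph) :
    g (deck hg x) = g x := (deck_spec hg x).1

lemma deck_deck {g : Sph → Sph} (hg : IsDegreeTwoRamifiedCovering g) (x : Sph) :
    deck hg (deck hg x) = x := by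
  symm
  apply deck_uniq hg
  · exact (g_deck hg x).symm
  · intro z hz
    rw [g_deck hg x] at hz
    rcases (deck_spec hg x).2 z hz with h | h
    · right; exact h
    · left; exact h

lemma deck_involutive {g : Sph → Sph} (hg : IsDegreeTwoRamifiedCovering g) :
    Function.Involutive (deck hg) := deck_deck hg

/-- if the fiber through `x` is the pair `{x, b}` with `b ≠ x` then `deck x = b` -/
lemma deck_eq_of_pair {g : Sph → Sph} (hg : IsDegreeTwoRamifiedCovering g) {x b : Sph}
    (hb : b ≠ x) (hfib : g ⁻¹' {g x} = {x, b}) : deck hg x = b := by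
  symm
  apply deck_uniq hg
  · have : b ∈ g ⁻¹' {g x} := by rw [hfib]; right; rfl
    exact this
  · intro z hz
    have : z ∈ ({x, b} : Set Sph) := by rw [← hfib]; exact hz
    exact this

/-- if the fiber through `x` is just `{x}` then `deck x = x` -/
lemma deck_eq_self_of_singleton {g : Sph → Sph} (hg : IsDegreeTwoRamifiedCovering g) {x : Sph}
    (hfib : g ⁻¹' {g x} = {x}) : deck hg x = x := by
  symm
  apply deck_uniq hg
  · rfl
  · intro z hz
    have : z ∈ ({x} : Set Sph) := by rw [← hfib]; exact hz
    left; exact this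

/-- at non-critical values, `deck x ≠ x` and the fiber is `{x, deck x}` -/
lemma deck_pair {g : Sph → Sph} (hg : IsDegreeTwoRamifiedCovering g) {x : Sph}
    (hcv : ¬IsCriticalValue g (g x)) :
    deck hg x ≠ x ∧ g ⁻¹' {g x} = {x, deck hg x} := by
  have hn2 : (g ⁻¹' {g x} : Set Sph).ncard = 2 := by
    rw [← Nat.card_coe_set_eq]; exact hg.2 (g x) hcv
  obtain ⟨a, b, hab, hfib⟩ := Set.ncard_eq_two.1 hn2
  have hxmem : x = a ∨ x = b := by
    have : x ∈ ({a, b} : Set Sph) := by rw [← hfib]; rfl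
    simpa using this
  rcases hxmem with hxa | hxb
  · subst hxa
    have hd := deck_eq_of_pair hg (Ne.symm hab) hfib
    rw [hd]
    exact ⟨Ne.symm hab, hfib⟩
  · subst hxb
    have hfib' : g ⁻¹' {g x} = {x, a} := by rw [hfib]; ext z; simp [or_comm]
    have hd := deck_eq_of_pair hg hab hfib'
    rw [hd]
    exact ⟨hab, hfib'⟩

-- ===== continuity of the deck transformation =====

lemma sq_eq_cases {A B : ℂ} (h : A ^ 2 = B ^ 2) : A = B ∨ A = -B := by
  have h0 : (A - B) * (A + B) = 0 := by linear_combination h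
  rcases mul_eq_zero.1 h0 with h1 | h1
  · left; exact sub_eq_zero.1 h1
  · right; exact eq_neg_of_add_eq_zero_left h1

lemma deck_continuousAt_of_critval {g : Sph → Sph} (hg : IsDegreeTwoRamifiedCovering g)
    {x : Sph} (hcv : IsCriticalValue g (g x)) : ContinuousAt (deck hg) x := by
  obtain ⟨c, hc, hfib⟩ := fiber_of_critval hg hcv
  have hxc : x = c := by
    have : x ∈ g ⁻¹' {g x} := rfl
    rw [hfib] at this; exact this
  subst hxc
  obtain ⟨k, hk2, hram⟩ := hc
  have hk2' : k = 2 := le_antisymm (hram.le_two hg) hk2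
  subst hk2'
  obtain ⟨C⟩ := hram.chart
  have hfibsub : g ⁻¹' {g x} ⊆ C.U := by rw [hfib]; exact Set.singleton_subset_iff.2 C.hx
  obtain ⟨Ω, hΩo, hΩy, hΩsub⟩ := exists_nhd_preimage_subset hg.1.1 C.hU hfibsub
  set N : Set Sph := C.U ∩ g ⁻¹' Ω with hN
  have hNopen : IsOpen N := C.hU.inter (hΩo.preimage hg.1.1)
  have hxN : x ∈ N := ⟨C.hx, hΩy⟩
  have key : ∀ z, ∀ hz : z ∈ N, deck hg z =
      ((C.φ.symm ⟨-(C.φ ⟨z, hz.1⟩ : ℂ), neg_mem_unitDisk (C.φ ⟨z, hz.1⟩).2⟩ : C.U) : Sph) := by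
    intro z hz
    set b : Sph :=
      ((C.φ.symm ⟨-(C.φ ⟨z, hz.1⟩ : ℂ), neg_mem_unitDisk (C.φ ⟨z, hz.1⟩).2⟩ : C.U) : Sph) with hb
    have hbU : b ∈ C.U := (C.φ.symm _).2
    have hφb : (C.φ ⟨b, hbU⟩ : ℂ) = -(C.φ ⟨z, hz.1⟩ : ℂ) := by
      have : (⟨b, hbU⟩ : C.U) = C.φ.symm ⟨-(C.φ ⟨z, hz.1⟩ : ℂ), _⟩ := Subtype.ext rfl
      rw [this, Homeomorph.apply_symm_apply]
    have hgb : g b = g z := by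
      apply C.g_eq_of_pow_eq (z := ⟨b, hbU⟩) (w := ⟨z, hz.1⟩)
      rw [hφb]; ring
    have hfibz : g ⁻¹' {g z} ⊆ C.U := fun p hp => by
      apply hΩsub
      have hgp : g p = g z := hp
      simpa [Set.mem_preimage, hgp] using hz.2
    have hfibeq : g ⁻¹' {g z} = {z, b} := by
      ext p
      constructor
      · intro hp
        have hgp : g p = g z := hp
        have hpU : p ∈ C.U := hfibz hp
        have hpow := C.pow_eq_of_g_eq (z := ⟨p, hpU⟩) (w := ⟨z, hz.1⟩) hgp
        rcases sq_eq_cases hpow with h1 | h1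
        · left
          exact congrArg Subtype.val (C.φ.injective (Subtype.ext h1) :
            (⟨p, hpU⟩ : C.U) = ⟨z, hz.1⟩)
        · right
          have : C.φ ⟨p, hpU⟩ = ⟨-(C.φ ⟨z, hz.1⟩ : ℂ), neg_mem_unitDisk (C.φ ⟨z, hz.1⟩).2⟩ :=
            Subtype.ext h1
          have h2 : (⟨p, hpU⟩ : C.U)
              = C.φ.symm ⟨-(C.φ ⟨z, hz.1⟩ : ℂ), neg_mem_unitDisk (C.φ ⟨z, hz.1⟩).2⟩ := by
            rw [← this, Homeomorph.symm_apply_apply]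
          exact congrArg Subtype.val h2
      · intro hp
        rcases hp with h | h
        · rw [h]; rfl
        · rw [h]; exact hgb
    by_cases hbz : b = z
    · rw [hbz] at hfibeq ⊢
      rw [Set.pair_eq_singleton] at hfibeq
      exact deck_eq_self_of_singleton hg hfibeq
    · exact deck_eq_of_pair hg hbz hfibeq
  have hcont : ContinuousOn (deck hg) N := by
    rw [continuousOn_iff_continuous_restrict]
    have heq : N.domRestrict (deck hg) = fun z : N =>
        ((C.φ.symm ⟨-(C.φ ⟨z.1, z.2.1⟩ : ℂ), neg_mem_unitDisk (C.φ ⟨z.1, z.2.1⟩).2⟩ : C.U) : Sph) :=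
      funext fun z => key z.1 z.2
    rw [heq]
    apply continuous_subtype_val.comp
    apply C.φ.symm.continuous.comp
    apply Continuous.subtype_mk
    apply Continuous.neg
    apply continuous_subtype_val.comp
    apply C.φ.continuous.comp
    exact Continuous.subtype_mk continuous_subtype_val _
  exact hcont.continuousAt (hNopen.mem_nhds hxN)

lemma deck_continuousAt_of_not_critval {g : Sph → Sph} (hg : IsDegreeTwoRamifiedCovering g)
    {x : Sph} (hcv : ¬IsCriticalValue g (g x)) : ContinuousAt (deck hg) x := by
  obtain ⟨hne, hfib⟩ := deck_pair hg hcv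
  set x' : Sph := deck hg x with hx'
  -- x and x' are not critical points, giving degree-1 charts
  have chart1 : ∀ z : Sph, ¬IsCriticalPt g z → Nonempty (Chart g z 1) := by
    intro z hz
    obtain ⟨k, hram⟩ := hg.1.2 z
    have hk1 : k = 1 := by
      by_contra h
      exact hz ⟨k, by have := hram.1; omega, hram⟩
    subst hk1
    exact hram.chart
  obtain ⟨C⟩ := chart1 x (fun h => hcv ⟨x, h, rfl⟩)
  obtain ⟨C'⟩ := chart1 x' (fun h => hcv ⟨x', h, g_deck hg x⟩)
  -- injectivity on degree-1 charts
  have hinjU : ∀ {D : Chart g x 1} (p q : Sph) (hp : p ∈ D.U) (hq : q ∈ D.U),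
      g p = g q → p = q := by
    intro D p q hp hq hpq
    have := D.pow_eq_of_g_eq (z := ⟨p, hp⟩) (w := ⟨q, hq⟩) hpq
    rw [pow_one, pow_one] at this
    exact congrArg Subtype.val (D.φ.injective (Subtype.ext this))
  have hinjU' : ∀ (p q : Sph) (hp : p ∈ C'.U) (hq : q ∈ C'.U), g p = g q → p = q := by
    intro p q hp hq hpq
    have := C'.pow_eq_of_g_eq (z := ⟨p, hp⟩) (w := ⟨q, hq⟩) hpq
    rw [pow_one, pow_one] at this
    exact congrArg Subtype.val (C'.φ.injective (Subtype.ext this))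
  have hd : 0 < dist x x' := dist_pos.2 (Ne.symm hne)
  set A : Set Sph := Metric.ball x (dist x x' / 2) with hA
  set A' : Set Sph := Metric.ball x' (dist x x' / 2) with hA'
  have hdisj : ∀ p : Sph, p ∈ A → p ∈ A' → False := by
    intro p hp hp'
    rw [hA, Metric.mem_ball] at hp
    rw [hA', Metric.mem_ball] at hp'
    have htri := dist_triangle x p x'
    rw [dist_comm x p] at htri
    linarith [htri, hp, hp']
  set W : Set Sph := (C.U ∩ A) ∪ (C'.U ∩ A') with hW
  have hWopen : IsOpen W := ((C.hU.inter Metric.isOpen_ball).union (C'.hU.inter Metric.isOpen_ball))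
  have hfibW : g ⁻¹' {g x} ⊆ W := by
    rw [hfib]
    rintro p (h | h)
    · rw [h]; left; exact ⟨C.hx, Metric.mem_ball_self (by linarith)⟩
    · rw [h]; right; exact ⟨C'.hx, Metric.mem_ball_self (by linarith)⟩
  obtain ⟨Ω, hΩo, hΩy, hΩsub⟩ := exists_nhd_preimage_subset hg.1.1 hWopen hfibW
  have hNCVopen : IsOpen {y : Sph | ¬IsCriticalValue g y} := by
    have : {y : Sph | ¬IsCriticalValue g y} = {y : Sph | IsCriticalValue g y}ᶜ := rfl
    rw [this]
    exact (critval_finite hg.1).isClosed.isOpen_compl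
  set N : Set Sph := (C.U ∩ A) ∩ g ⁻¹' (Ω ∩ C'.V ∩ {y : Sph | ¬IsCriticalValue g y}) with hN
  have hNopen : IsOpen N :=
    (C.hU.inter Metric.isOpen_ball).inter
      (((hΩo.inter C'.hV).inter hNCVopen).preimage hg.1.1)
  have hxN : x ∈ N := by
    refine ⟨⟨C.hx, Metric.mem_ball_self (by linarith)⟩, ⟨⟨hΩy, ?_⟩, hcv⟩⟩
    have := C'.hfx
    rwa [g_deck hg x] at this
  have key : ∀ z, ∀ hz : z ∈ N, deck hg z =
      ((C'.φ.symm (C'.ψ ⟨g z, hz.2.1.2⟩) : C'.U) : Sph) := by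
    intro z hz
    obtain ⟨⟨hzU, hzA⟩, hzg⟩ := hz
    obtain ⟨⟨hzΩ, hzV'⟩, hzNCV⟩ := hzg
    set q : Sph := ((C'.φ.symm (C'.ψ ⟨g z, hzV'⟩) : C'.U) : Sph) with hq
    have hqU' : q ∈ C'.U := (C'.φ.symm _).2
    have hgq : g q = g z := by
      rw [hq, C'.g_apply_symm]
      have h1 : (⟨((C'.ψ ⟨g z, hzV'⟩ : ℂ)) ^ 1,
          pow_mem_unitDisk (C'.ψ ⟨g z, hzV'⟩).2 C'.hk⟩ : unitDisk) = C'.ψ ⟨g z, hzV'⟩ :=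
        Subtype.ext (pow_one _)
      rw [h1, Homeomorph.symm_apply_apply]
    obtain ⟨hdne, hdfib⟩ := deck_pair hg (hzNCV : ¬IsCriticalValue g (g z))
    have hWfib : g ⁻¹' {g z} ⊆ W := fun p hp => by
      apply hΩsub
      have hgp : g p = g z := hp
      simpa [Set.mem_preimage, hgp] using hzΩ
    have hdmem : deck hg z ∈ W := hWfib (by
      have : g (deck hg z) = g z := g_deck hg z
      exact this)
    have hdeckU' : deck hg z ∈ C'.U ∩ A' := by
      rcases hdmem with h | h
      · exfalso
        have := hinjU (D := C) (deck hg z) z h.1 hzU (g_deck hg z)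
        exact hdne this
      · exact h
    have hqfib : q ∈ g ⁻¹' {g z} := hgq
    rw [hdfib] at hqfib
    rcases hqfib with h | h
    · exfalso
      have hzU' : z ∈ C'.U := h ▸ hqU'
      exact hdne (hinjU' (deck hg z) z hdeckU'.1 hzU' (g_deck hg z))
    · exact h.symm
  have hcont : ContinuousOn (deck hg) N := by
    rw [continuousOn_iff_continuous_restrict]
    have heq : N.domRestrict (deck hg) = fun z : N =>
        ((C'.φ.symm (C'.ψ ⟨g z.1, z.2.2.1.2⟩) : C'.U) : Sph) :=
      funext fun z => key z.1 z.2
    rw [heq]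
    apply continuous_subtype_val.comp
    apply C'.φ.symm.continuous.comp
    apply C'.ψ.continuous.comp
    exact Continuous.subtype_mk (hg.1.1.comp continuous_subtype_val) _
  exact hcont.continuousAt (hNopen.mem_nhds hxN)

lemma deck_continuous {g : Sph → Sph} (hg : IsDegreeTwoRamifiedCovering g) :
    Continuous (deck hg) := by
  rw [continuous_iff_continuousAt]
  intro x
  by_cases hcv : IsCriticalValue g (g x)
  · exact deck_continuousAt_of_critval hg hcv
  · exact deck_continuousAt_of_not_critval hg hcv

-- ===== the sphere is infinite =====

lemma sph_infinite {g : Sph → Sph} (hg : IsRamifiedCovering g) : Infinite Sph := by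
  have hne : Nonempty Sph := by
    obtain ⟨p, hp⟩ := (NormedSpace.sphere_nonempty (E := EuclideanSpace ℝ (Fin 3))
      (x := 0) (r := 1)).2 (le_of_lt one_pos)
    exact ⟨⟨p, hp⟩⟩
  obtain ⟨x⟩ := hne
  obtain ⟨k, hram⟩ := hg.2 x
  obtain ⟨C⟩ := hram.chart
  haveI hdisk : Infinite unitDisk := Set.infinite_coe_iff.2 unitDisk_infinite
  have hU : Infinite C.U := C.φ.toEquiv.infinite_iff.2 hdisk
  have hUinf : (C.U : Set Sph).Infinite := Set.infinite_coe_iff.1 hU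
  exact Set.infinite_univ_iff.1 (hUinf.mono (Set.subset_univ _))


/-- A degree-2 ramified covering `g : S² → S²` admits a nontrivial deck
involution: a homeomorphism `M ≠ id` with `M ∘ M = id` and `g ∘ M = g`. -/
theorem exists_deck_involution (g : Sph → Sph) (hg : IsDegreeTwoRamifiedCovering g) :
    ∃ M : Sph ≃ₜ Sph, (∃ x, M x ≠ x) ∧ (∀ x, M (M x) = x) ∧ ∀ x, g (M x) = g x := by
  have hinv : Function.Involutive (deck hg) := deck_involutive hg
  refine ⟨⟨hinv.toPerm (deck hg), deck_continuous hg, deck_continuous hg⟩, ?_, ?_, ?_⟩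
  · -- nontriviality: pick a non-critical value
    haveI : Infinite Sph := sph_infinite hg.1
    obtain ⟨y, -, hyncv⟩ := (Set.infinite_univ.diff (critval_finite hg.1)).nonempty
    have hyncv' : ¬IsCriticalValue g y := hyncv
    have hn2 : (g ⁻¹' {y} : Set Sph).ncard = 2 := by
      rw [← Nat.card_coe_set_eq]; exact hg.2 y hyncv'
    obtain ⟨a, b, hab, hfib⟩ := Set.ncard_eq_two.1 hn2
    have hga : g a = y := by
      have : a ∈ g ⁻¹' {y} := by rw [hfib]; left; rfl
      exact this
    refine ⟨a, ?_⟩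
    have : ¬IsCriticalValue g (g a) := by rwa [hga]
    exact (deck_pair hg this).1
  · exact fun x => hinv x
  · exact fun x => g_deck hg x
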